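/- arXiv:2504.04856 — 3 statements merged into one kernel-verified Lean document; each statement's English description precedes it below -/
import Mathlib

section
/- Let A₁, B₁, A₂, B₂ be nonempty finite types, let K₁ and K₂ be Hermitian cost matrices indexed by (A₁×B₁)×(A₁×B₁) and (A₂×B₂)×(A₂×B₂), and let ρ_i, σ_i be states on A_i, B_i for i = 1, 2. Define K₁₂ on the composite system (A₁×A₂)×(B₁×B₂), identified with (A₁×B₁)×(A₂×B₂) via the obvious index bijection, by K₁₂ = K₁ ⊗ₖ 1 + 1 ⊗ₖ K₂. Then 𝒦_{K₁₂}(ρ₁ ⊗ₖ ρ₂, σ₁ ⊗ₖ σ₂) ≤ 𝒦_{K₁}(ρ₁, σ₁) + 𝒦_{K₂}(ρ₂, σ₂). -/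
open Matrix
open scoped Kronecker ComplexOrder

noncomputable def jordan {n : Type*} [Fintype n] (X Y : Matrix n n ℂ) : Matrix n n ℂ :=
  (2 : ℂ)⁻¹ • (X * Y + Y * X)

noncomputable def trB {A B : Type*} [Fintype B] (M : Matrix (A × B) (A × B) ℂ) : Matrix A A ℂ :=
  Matrix.of fun i j => ∑ k, M (i, k) (j, k)

noncomputable def trA {A B : Type*} [Fintype A] (M : Matrix (A × B) (A × B) ℂ) : Matrix B B ℂ :=
  Matrix.of fun k l => ∑ i, M (i, k) (i, l)

def ptA {A B : Type*} (M : Matrix (A × B) (A × B) ℂ) : Matrix (A × B) (A × B) ℂ :=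
  Matrix.of fun p q => M (q.1, p.2) (p.1, q.2)

def swap (A : Type*) [DecidableEq A] : Matrix (A × A) (A × A) ℂ :=
  Matrix.of fun p q => if p.1 = q.2 ∧ p.2 = q.1 then 1 else 0

def IsState {A : Type*} [Fintype A] (ρ : Matrix A A ℂ) : Prop :=
  ρ.PosSemidef ∧ ρ.trace = 1

def IsJam {A B : Type*} [Fintype A] [Fintype B] [DecidableEq A]
    (J : Matrix (A × B) (A × B) ℂ) : Prop :=
  (ptA J).PosSemidef ∧ trB J = 1

noncomputable def cost {A B : Type*} [Fintype A] [Fintype B] [DecidableEq A] [DecidableEq B]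
    (K : Matrix (A × B) (A × B) ℂ) (ρ : Matrix A A ℂ) (σ : Matrix B B ℂ) : ℝ :=
  sInf { r : ℝ | ∃ J : Matrix (A × B) (A × B) ℂ, IsJam J ∧
      trA ((ρ ⊗ₖ (1 : Matrix B B ℂ)) * J) = σ ∧
      r = (Matrix.trace (K * jordan (ρ ⊗ₖ (1 : Matrix B B ℂ)) J)).re }

/-! ### Auxiliary lemmas -/

lemma kron_conjTranspose {n m : Type*} (A : Matrix n n ℂ) (B : Matrix m m ℂ) :
    (A ⊗ₖ B)ᴴ = Aᴴ ⊗ₖ Bᴴ := by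
  ext ⟨i, k⟩ ⟨j, l⟩
  simp [Matrix.conjTranspose_apply, Matrix.kroneckerMap_apply, star_mul']

lemma psd_kron {n m : Type*} [Fintype n] [Fintype m] {A : Matrix n n ℂ} {B : Matrix m m ℂ}
    (hA : A.PosSemidef) (hB : B.PosSemidef) : (A ⊗ₖ B).PosSemidef := by
  exact hA.kronecker hB

lemma star_single' {n : Type*} [DecidableEq n] (a : n) :
    star (Pi.single a 1 : n → ℂ) = (Pi.single a 1 : n → ℂ) := by
  funext i
  simp [Pi.single_apply, apply_ite (star : ℂ → ℂ)]

lemma psd_diag_nonneg {n : Type*} [Fintype n] [DecidableEq n] {N : Matrix n n ℂ}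
    (hN : N.PosSemidef) (a : n) : 0 ≤ (N a a).re ∧ (N a a).im = 0 := by
  have h := hN.dotProduct_mulVec_nonneg (Pi.single a 1 : n → ℂ)
  rw [star_single', Matrix.mulVec_single] at h
  simp only [single_dotProduct, one_mul, mul_one] at h
  rw [Complex.le_def] at h
  constructor
  · simpa using h.1
  · simpa using h.2.symm

lemma psd_quad {n : Type*} [Fintype n] [DecidableEq n] {N : Matrix n n ℂ}
    (hN : N.PosSemidef) (a b : n) (u v : ℂ) :
    0 ≤ star u * u * N a a + star u * v * N a b + star v * u * N b a + star v * v * N b b := by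
  have h := hN.dotProduct_mulVec_nonneg (u • (Pi.single a 1 : n → ℂ) + v • (Pi.single b 1 : n → ℂ))
  have hsx : star (u • (Pi.single a 1 : n → ℂ) + v • (Pi.single b 1 : n → ℂ)) =
      star u • (Pi.single a 1 : n → ℂ) + star v • (Pi.single b 1 : n → ℂ) := by
    funext i
    simp [Pi.single_apply, apply_ite (star : ℂ → ℂ), mul_comm]
  rw [hsx, Matrix.mulVec_add, Matrix.mulVec_smul, Matrix.mulVec_smul,
    Matrix.mulVec_single, Matrix.mulVec_single,
    add_dotProduct, smul_dotProduct, smul_dotProduct,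
    dotProduct_add, dotProduct_smul, dotProduct_smul] at h
  simp only [single_dotProduct, Pi.add_apply, Pi.smul_apply, smul_eq_mul, one_mul,
    mul_one, MulOpposite.op_one, one_smul, Matrix.col_apply] at h
  convert h using 1
  ring

lemma psd_trace_re_nonneg {n : Type*} [Fintype n] [DecidableEq n] {N : Matrix n n ℂ}
    (hN : N.PosSemidef) : 0 ≤ N.trace.re := by
  rw [Matrix.trace, Complex.re_sum]
  exact Finset.sum_nonneg fun i _ => (psd_diag_nonneg hN i).1

lemma psd_entry_le_trace_re {n : Type*} [Fintype n] [DecidableEq n] {N : Matrix n n ℂ}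
    (hN : N.PosSemidef) (a b : n) : ‖N a b‖ ≤ N.trace.re := by
  have hdiag_le : ∀ s : Finset n, (∑ i ∈ s, (N i i).re) ≤ N.trace.re := by
    intro s
    rw [Matrix.trace, Complex.re_sum]
    exact Finset.sum_le_sum_of_subset_of_nonneg (Finset.subset_univ s)
      (fun i _ _ => (psd_diag_nonneg hN i).1)
  by_cases hab : a = b
  · subst hab
    have h1 := psd_diag_nonneg hN a
    have : ‖N a a‖ = (N a a).re := by
      rw [← Complex.re_add_im (N a a), h1.2]
      simp [abs_of_nonneg h1.1]
    rw [this]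
    calc (N a a).re = ∑ i ∈ {a}, (N i i).re := by simp
    _ ≤ N.trace.re := hdiag_le _
  by_cases hz : N a b = 0
  · rw [hz]
    simpa using psd_trace_re_nonneg hN
  set z := N a b with hzdef
  set c : ℝ := ‖z‖ with hcdef
  have hc : (0:ℝ) < c := by rw [hcdef]; exact norm_pos_iff.mpr hz
  have hcne : (c:ℂ) ≠ 0 := by exact_mod_cast hc.ne'
  have hconj : (starRingEnd ℂ) z * z = (c:ℂ)^2 := by
    rw [mul_comm, Complex.mul_conj]
    norm_cast
    rw [hcdef, Complex.sq_norm]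
  have hNba : N b a = (starRingEnd ℂ) z := by
    rw [hzdef]
    calc N b a = Nᴴ b a := by rw [hN.1]
    _ = (starRingEnd ℂ) (N a b) := rfl
  have h := psd_quad hN a b 1 (-((starRingEnd ℂ) z) / c)
  have hE : star (1:ℂ) * 1 * N a a + star (1:ℂ) * (-((starRingEnd ℂ) z) / c) * N a b +
      star (-((starRingEnd ℂ) z) / c) * 1 * N b a +
      star (-((starRingEnd ℂ) z) / c) * (-((starRingEnd ℂ) z) / c) * N b b
      = N a a + N b b - (((2 * c : ℝ)) : ℂ) := by
    have hsv : star (-((starRingEnd ℂ) z) / c) = -z / c := by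
      simp [star_div₀, RCLike.star_def, Complex.conj_conj, Complex.conj_ofReal]
    rw [hsv, hNba, ← hzdef, star_one]
    push_cast
    field_simp
    ring_nf
    linear_combination (N b b - 2*(c:ℂ)) * hconj
  rw [hE, Complex.le_def] at h
  have hre := h.1
  simp only [Complex.zero_re, Complex.sub_re, Complex.add_re, Complex.ofReal_re] at hre
  have h3 : (N a a).re + (N b b).re ≤ N.trace.re := by
    calc (N a a).re + (N b b).re = ∑ i ∈ ({a, b} : Finset n), (N i i).re := by
          rw [Finset.sum_pair hab]
    _ ≤ N.trace.re := hdiag_le _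
  show c ≤ N.trace.re
  linarith

section traces
variable {A B : Type*} [Fintype A] [Fintype B]

lemma trace_trA (M : Matrix (A × B) (A × B) ℂ) : (trA M).trace = M.trace := by
  rw [Matrix.trace, Matrix.trace]
  simp only [Matrix.diag, trA, Matrix.of_apply]
  rw [Fintype.sum_prod_type]
  rw [Finset.sum_comm]

lemma trace_trB (M : Matrix (A × B) (A × B) ℂ) : (trB M).trace = M.trace := by
  rw [Matrix.trace, Matrix.trace]
  simp only [Matrix.diag, trB, Matrix.of_apply]
  rw [Fintype.sum_prod_type]

lemma trace_ptA (M : Matrix (A × B) (A × B) ℂ) : (ptA M).trace = M.trace := by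
  rw [Matrix.trace, Matrix.trace]
  exact Finset.sum_congr rfl fun p _ => rfl

lemma jam_entry_bound [DecidableEq A] [DecidableEq B] {J : Matrix (A × B) (A × B) ℂ}
    (hJ : IsJam J) (p q : A × B) : ‖J p q‖ ≤ (Fintype.card A : ℝ) := by
  have h1 : J p q = ptA J (q.1, p.2) (p.1, q.2) := rfl
  have h2 := psd_entry_le_trace_re hJ.1 (q.1, p.2) (p.1, q.2)
  have h3 : (ptA J).trace = (Fintype.card A : ℂ) := by
    rw [trace_ptA, ← trace_trB J, hJ.2, Matrix.trace_one]
  rw [h3] at h2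
  rw [h1]
  simpa using h2

lemma trace_submatrix_equiv' {n m : Type*} [Fintype n] [Fintype m] (e : m ≃ n)
    (M : Matrix n n ℂ) : (M.submatrix e e).trace = M.trace := by
  rw [Matrix.trace, Matrix.trace]
  exact Fintype.sum_equiv e _ _ fun i => rfl

end traces

lemma costSet_nonempty {A B : Type*} [Fintype A] [Fintype B] [DecidableEq A] [DecidableEq B]
    (K : Matrix (A × B) (A × B) ℂ) {ρ : Matrix A A ℂ} (hρ : IsState ρ)
    {σ : Matrix B B ℂ} (hσ : IsState σ) :
    Set.Nonempty { r : ℝ | ∃ J : Matrix (A × B) (A × B) ℂ, IsJam J ∧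
      trA ((ρ ⊗ₖ (1 : Matrix B B ℂ)) * J) = σ ∧
      r = (Matrix.trace (K * jordan (ρ ⊗ₖ (1 : Matrix B B ℂ)) J)).re } := by
  refine ⟨_, (1 : Matrix A A ℂ) ⊗ₖ σ, ⟨?_, ?_⟩, ?_, rfl⟩
  · have h : ptA ((1 : Matrix A A ℂ) ⊗ₖ σ) = (1 : Matrix A A ℂ) ⊗ₖ σ := by
      ext ⟨i, k⟩ ⟨j, l⟩
      show (1 : Matrix A A ℂ) j i * σ k l = (1 : Matrix A A ℂ) i j * σ k l
      congr 1
      rw [Matrix.one_apply, Matrix.one_apply]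
      simp [eq_comm]
    rw [h]
    exact psd_kron Matrix.PosSemidef.one hσ.1
  · ext i j
    show (∑ k, ((1 : Matrix A A ℂ) ⊗ₖ σ) (i, k) (j, k)) = (1 : Matrix A A ℂ) i j
    have h4 : ∀ k : B, ((1 : Matrix A A ℂ) ⊗ₖ σ) (i, k) (j, k) = (1 : Matrix A A ℂ) i j * σ k k :=
      fun k => rfl
    rw [Finset.sum_congr rfl fun k _ => h4 k, ← Finset.mul_sum]
    have : ∑ k, σ k k = σ.trace := rfl
    rw [this, hσ.2, mul_one]
  · have h : (ρ ⊗ₖ (1 : Matrix B B ℂ)) * ((1 : Matrix A A ℂ) ⊗ₖ σ) = ρ ⊗ₖ σ := by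
      rw [← Matrix.mul_kronecker_mul, mul_one, one_mul]
    rw [h]
    ext k l
    show (∑ i, (ρ ⊗ₖ σ) (i, k) (i, l)) = σ k l
    have h4 : ∀ i : A, (ρ ⊗ₖ σ) (i, k) (i, l) = ρ i i * σ k l := fun i => rfl
    rw [Finset.sum_congr rfl fun i _ => h4 i, ← Finset.sum_mul]
    have : ∑ i, ρ i i = ρ.trace := rfl
    rw [this, hρ.2, one_mul]

lemma costSet_bddBelow {A B : Type*} [Fintype A] [Fintype B] [DecidableEq A] [DecidableEq B]
    (K : Matrix (A × B) (A × B) ℂ) {ρ : Matrix A A ℂ} (hρ : IsState ρ) (σ : Matrix B B ℂ) :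
    BddBelow { r : ℝ | ∃ J : Matrix (A × B) (A × B) ℂ, IsJam J ∧
      trA ((ρ ⊗ₖ (1 : Matrix B B ℂ)) * J) = σ ∧
      r = (Matrix.trace (K * jordan (ρ ⊗ₖ (1 : Matrix B B ℂ)) J)).re } := by
  set X := ρ ⊗ₖ (1 : Matrix B B ℂ) with hX
  set cA : ℝ := (Fintype.card A : ℝ) with hcA
  set cB : ℝ := (Fintype.card B : ℝ) with hcB
  set cP : ℝ := (Fintype.card (A × B) : ℝ) with hcP
  have hcA0 : 0 ≤ cA := Nat.cast_nonneg _
  have hcB0 : 0 ≤ cB := Nat.cast_nonneg _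
  have hcP0 : 0 ≤ cP := Nat.cast_nonneg _
  set c : ℝ := cP * (cB * cA) with hc
  have hc0 : 0 ≤ c := by positivity
  refine ⟨-((∑ p : A × B, ∑ q : A × B, ‖K p q‖) * c), ?_⟩
  rintro r ⟨J, hJ, hσJ, rfl⟩
  have hXpsd : X.PosSemidef := psd_kron hρ.1 Matrix.PosSemidef.one
  have hXtr : X.trace.re = cB := by
    rw [hX, Matrix.trace_kronecker, hρ.2, one_mul, Matrix.trace_one]
    simp [hcB]
  have hXe : ∀ q s, ‖X q s‖ ≤ cB := by
    intro q s
    have := psd_entry_le_trace_re hXpsd q s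
    rwa [hXtr] at this
  have hJe : ∀ s p, ‖J s p‖ ≤ cA := fun s p => jam_entry_bound hJ s p
  have hMul : ∀ (P Q : Matrix (A × B) (A × B) ℂ) (b1 b2 : ℝ), 0 ≤ b1 → 0 ≤ b2 →
      (∀ i j, ‖P i j‖ ≤ b1) → (∀ i j, ‖Q i j‖ ≤ b2) →
      ∀ q p, ‖(P * Q) q p‖ ≤ cP * (b1 * b2) := by
    intro P Q b1 b2 hb1 hb2 hP hQ q p
    rw [Matrix.mul_apply]
    refine (norm_sum_le _ _).trans ?_
    calc ∑ s, ‖P q s * Q s p‖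
        ≤ ∑ _s : A × B, (b1 * b2) := Finset.sum_le_sum fun s _ => by
          rw [norm_mul]
          exact mul_le_mul (hP q s) (hQ s p) (norm_nonneg _) hb1
      _ = cP * (b1 * b2) := by
          rw [Finset.sum_const, Finset.card_univ, nsmul_eq_mul, hcP]
  have hM : ∀ q p, ‖(jordan X J) q p‖ ≤ c := by
    intro q p
    have h1 : (jordan X J) q p = (2:ℂ)⁻¹ * ((X * J) q p + (J * X) q p) := by
      simp [jordan, Matrix.add_apply]
    rw [h1, norm_mul]
    have h2 : ‖(2:ℂ)⁻¹‖ = 2⁻¹ := by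
      rw [norm_inv]
      simp
    rw [h2]
    have h3 : ‖(X * J) q p + (J * X) q p‖ ≤ c + c := by
      refine (norm_add_le _ _).trans ?_
      have hXJ := hMul X J cB cA hcB0 hcA0 hXe hJe q p
      have hJX := hMul J X cA cB hcA0 hcB0 hJe hXe q p
      rw [hc]
      have : cP * (cA * cB) = cP * (cB * cA) := by ring
      rw [this] at hJX
      exact add_le_add hXJ hJX
    calc (2:ℝ)⁻¹ * ‖(X * J) q p + (J * X) q p‖ ≤ 2⁻¹ * (c + c) := by
          refine mul_le_mul_of_nonneg_left h3 (by norm_num)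
      _ = c := by ring
  have hbound : |(Matrix.trace (K * jordan X J)).re| ≤
      (∑ p : A × B, ∑ q : A × B, ‖K p q‖) * c := by
    refine (Complex.abs_re_le_norm _).trans ?_
    rw [Matrix.trace]
    refine (norm_sum_le _ _).trans ?_
    rw [Finset.sum_mul]
    refine Finset.sum_le_sum fun p _ => ?_
    rw [Matrix.diag_apply, Matrix.mul_apply]
    refine (norm_sum_le _ _).trans ?_
    rw [Finset.sum_mul]
    refine Finset.sum_le_sum fun q _ => ?_
    rw [norm_mul]
    exact mul_le_mul_of_nonneg_left (hM q p) (norm_nonneg _)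
  have := neg_abs_le ((Matrix.trace (K * jordan X J)).re)
  linarith [hbound]

theorem stmt13 {A₁ B₁ A₂ B₂ : Type*} [Fintype A₁] [Fintype B₁] [Fintype A₂] [Fintype B₂]
    [Nonempty A₁] [Nonempty B₁] [Nonempty A₂] [Nonempty B₂]
    [DecidableEq A₁] [DecidableEq B₁] [DecidableEq A₂] [DecidableEq B₂]
    (K₁ : Matrix (A₁ × B₁) (A₁ × B₁) ℂ) (hK₁ : K₁.IsHermitian)
    (K₂ : Matrix (A₂ × B₂) (A₂ × B₂) ℂ) (hK₂ : K₂.IsHermitian)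
    (ρ₁ : Matrix A₁ A₁ ℂ) (hρ₁ : IsState ρ₁) (σ₁ : Matrix B₁ B₁ ℂ) (hσ₁ : IsState σ₁)
    (ρ₂ : Matrix A₂ A₂ ℂ) (hρ₂ : IsState ρ₂) (σ₂ : Matrix B₂ B₂ ℂ) (hσ₂ : IsState σ₂)
    (K₁₂ : Matrix ((A₁ × A₂) × B₁ × B₂) ((A₁ × A₂) × B₁ × B₂) ℂ)
    (hK₁₂ : K₁₂ = Matrix.of fun p q =>
        K₁ (p.1.1, p.2.1) (q.1.1, q.2.1) *
          (if p.1.2 = q.1.2 ∧ p.2.2 = q.2.2 then 1 else 0) +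
        (if p.1.1 = q.1.1 ∧ p.2.1 = q.2.1 then 1 else 0) *
          K₂ (p.1.2, p.2.2) (q.1.2, q.2.2)) :
    cost K₁₂ (ρ₁ ⊗ₖ ρ₂) (σ₁ ⊗ₖ σ₂) ≤ cost K₁ ρ₁ σ₁ + cost K₂ ρ₂ σ₂ := by
  classical
  set e : ((A₁ × A₂) × B₁ × B₂) ≃ ((A₁ × B₁) × A₂ × B₂) :=
    Equiv.prodProdProdComm A₁ A₂ B₁ B₂ with he
  set X₁ := ρ₁ ⊗ₖ (1 : Matrix B₁ B₁ ℂ) with hX₁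
  set X₂ := ρ₂ ⊗ₖ (1 : Matrix B₂ B₂ ℂ) with hX₂
  have hstate12 : IsState (ρ₁ ⊗ₖ ρ₂) :=
    ⟨psd_kron hρ₁.1 hρ₂.1, by rw [Matrix.trace_kronecker, hρ₁.2, hρ₂.2, one_mul]⟩
  have hbdd := costSet_bddBelow K₁₂ hstate12 (σ₁ ⊗ₖ σ₂)
  have hne₁ := costSet_nonempty K₁ hρ₁ hσ₁
  have hne₂ := costSet_nonempty K₂ hρ₂ hσ₂
  -- key: sum of feasible values is feasible for the product problem
  have key : ∀ r₁ ∈ { r : ℝ | ∃ J : Matrix (A₁ × B₁) (A₁ × B₁) ℂ, IsJam J ∧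
        trA ((ρ₁ ⊗ₖ (1 : Matrix B₁ B₁ ℂ)) * J) = σ₁ ∧
        r = (Matrix.trace (K₁ * jordan (ρ₁ ⊗ₖ (1 : Matrix B₁ B₁ ℂ)) J)).re },
      ∀ r₂ ∈ { r : ℝ | ∃ J : Matrix (A₂ × B₂) (A₂ × B₂) ℂ, IsJam J ∧
        trA ((ρ₂ ⊗ₖ (1 : Matrix B₂ B₂ ℂ)) * J) = σ₂ ∧
        r = (Matrix.trace (K₂ * jordan (ρ₂ ⊗ₖ (1 : Matrix B₂ B₂ ℂ)) J)).re },
      cost K₁₂ (ρ₁ ⊗ₖ ρ₂) (σ₁ ⊗ₖ σ₂) ≤ r₁ + r₂ := by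
    rintro r₁ ⟨J₁, hJ₁, hc₁, rfl⟩ r₂ ⟨J₂, hJ₂, hc₂, rfl⟩
    -- the product Jamiołkowski matrix
    set J₁₂ : Matrix ((A₁ × A₂) × B₁ × B₂) ((A₁ × A₂) × B₁ × B₂) ℂ :=
      (J₁ ⊗ₖ J₂).submatrix e e with hJ₁₂
    have hXfact : ((ρ₁ ⊗ₖ ρ₂) ⊗ₖ (1 : Matrix (B₁ × B₂) (B₁ × B₂) ℂ)) =
        (X₁ ⊗ₖ X₂).submatrix e e := by
      ext ⟨⟨a1, a2⟩, ⟨b1, b2⟩⟩ ⟨⟨c1, c2⟩, ⟨d1, d2⟩⟩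
      show ρ₁ a1 c1 * ρ₂ a2 c2 * (1 : Matrix (B₁ × B₂) (B₁ × B₂) ℂ) (b1, b2) (d1, d2) =
        (ρ₁ a1 c1 * (1 : Matrix B₁ B₁ ℂ) b1 d1) * (ρ₂ a2 c2 * (1 : Matrix B₂ B₂ ℂ) b2 d2)
      rw [Matrix.one_apply, Matrix.one_apply, Matrix.one_apply]
      by_cases h1 : b1 = d1 <;> by_cases h2 : b2 = d2 <;>
        simp [h1, h2, Prod.ext_iff] <;> ring
    have hmulP : ((ρ₁ ⊗ₖ ρ₂) ⊗ₖ (1 : Matrix (B₁ × B₂) (B₁ × B₂) ℂ)) * J₁₂ =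
        ((X₁ * J₁) ⊗ₖ (X₂ * J₂)).submatrix e e := by
      rw [hXfact, hJ₁₂, Matrix.submatrix_mul_equiv, ← Matrix.mul_kronecker_mul]
    have hmulQ : J₁₂ * ((ρ₁ ⊗ₖ ρ₂) ⊗ₖ (1 : Matrix (B₁ × B₂) (B₁ × B₂) ℂ)) =
        ((J₁ * X₁) ⊗ₖ (J₂ * X₂)).submatrix e e := by
      rw [hXfact, hJ₁₂, Matrix.submatrix_mul_equiv, ← Matrix.mul_kronecker_mul]
    have htrA : ∀ (M₁ : Matrix (A₁ × B₁) (A₁ × B₁) ℂ) (M₂ : Matrix (A₂ × B₂) (A₂ × B₂) ℂ),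
        trA ((M₁ ⊗ₖ M₂).submatrix e e) = (trA M₁) ⊗ₖ (trA M₂) := by
      intro M₁ M₂
      ext ⟨b1, b2⟩ ⟨d1, d2⟩
      show (∑ a : A₁ × A₂, M₁ (a.1, b1) (a.1, d1) * M₂ (a.2, b2) (a.2, d2)) =
        (∑ a1, M₁ (a1, b1) (a1, d1)) * (∑ a2, M₂ (a2, b2) (a2, d2))
      rw [Fintype.sum_prod_type, Finset.sum_mul_sum]
    have htrX₁J₁ : Matrix.trace (X₁ * J₁) = 1 := by
      rw [← trace_trA (X₁ * J₁), hc₁, hσ₁.2]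
    have htrX₂J₂ : Matrix.trace (X₂ * J₂) = 1 := by
      rw [← trace_trA (X₂ * J₂), hc₂, hσ₂.2]
    have htrJ₁X₁ : Matrix.trace (J₁ * X₁) = 1 := by
      rw [Matrix.trace_mul_comm]; exact htrX₁J₁
    have htrJ₂X₂ : Matrix.trace (J₂ * X₂) = 1 := by
      rw [Matrix.trace_mul_comm]; exact htrX₂J₂
    refine csInf_le hbdd ⟨J₁₂, ⟨?_, ?_⟩, ?_, ?_⟩
    · -- positivity of the partial transpose
      have hL1 : ptA J₁₂ = ((ptA J₁) ⊗ₖ (ptA J₂)).submatrix e e := by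
        ext ⟨⟨a1, a2⟩, ⟨b1, b2⟩⟩ ⟨⟨c1, c2⟩, ⟨d1, d2⟩⟩
        rfl
      rw [hL1]
      exact (psd_kron hJ₁.1 hJ₂.1).submatrix _
    · -- partial trace over B is the identity
      have hL2 : trB J₁₂ = (trB J₁) ⊗ₖ (trB J₂) := by
        ext ⟨a1, a2⟩ ⟨c1, c2⟩
        show (∑ b : B₁ × B₂, J₁ (a1, b.1) (c1, b.1) * J₂ (a2, b.2) (c2, b.2)) =
          (∑ b1, J₁ (a1, b1) (c1, b1)) * (∑ b2, J₂ (a2, b2) (c2, b2))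
        rw [Fintype.sum_prod_type, Finset.sum_mul_sum]
      rw [hL2, hJ₁.2, hJ₂.2, Matrix.one_kronecker_one]
    · -- the marginal constraint
      rw [hmulP, htrA, hc₁, hc₂]
    · -- the value
      have hKfact : K₁₂ = ((K₁ ⊗ₖ (1 : Matrix (A₂ × B₂) (A₂ × B₂) ℂ)) +
          ((1 : Matrix (A₁ × B₁) (A₁ × B₁) ℂ) ⊗ₖ K₂)).submatrix e e := by
        rw [hK₁₂]
        ext ⟨⟨a1, a2⟩, ⟨b1, b2⟩⟩ ⟨⟨c1, c2⟩, ⟨d1, d2⟩⟩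
        show K₁ (a1, b1) (c1, d1) * (if a2 = c2 ∧ b2 = d2 then 1 else 0) +
            (if a1 = c1 ∧ b1 = d1 then 1 else 0) * K₂ (a2, b2) (c2, d2) =
          K₁ (a1, b1) (c1, d1) * (1 : Matrix (A₂ × B₂) (A₂ × B₂) ℂ) (a2, b2) (c2, d2) +
            (1 : Matrix (A₁ × B₁) (A₁ × B₁) ℂ) (a1, b1) (c1, d1) * K₂ (a2, b2) (c2, d2)
        rw [Matrix.one_apply, Matrix.one_apply]
        simp [Prod.ext_iff]
      have hjord : jordan ((ρ₁ ⊗ₖ ρ₂) ⊗ₖ (1 : Matrix (B₁ × B₂) (B₁ × B₂) ℂ)) J₁₂ =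
          ((2:ℂ)⁻¹ • ((X₁ * J₁) ⊗ₖ (X₂ * J₂) + (J₁ * X₁) ⊗ₖ (J₂ * X₂))).submatrix e e := by
        rw [jordan, hmulP, hmulQ]
        ext p q
        rfl
      have hval : Matrix.trace (K₁₂ *
          jordan ((ρ₁ ⊗ₖ ρ₂) ⊗ₖ (1 : Matrix (B₁ × B₂) (B₁ × B₂) ℂ)) J₁₂) =
          Matrix.trace (K₁ * jordan X₁ J₁) + Matrix.trace (K₂ * jordan X₂ J₂) := by
        rw [hKfact, hjord, Matrix.submatrix_mul_equiv, trace_submatrix_equiv']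
        rw [Matrix.mul_smul, Matrix.trace_smul, Matrix.mul_add, Matrix.add_mul, Matrix.add_mul,
          Matrix.trace_add, Matrix.trace_add, Matrix.trace_add]
        rw [← Matrix.mul_kronecker_mul, ← Matrix.mul_kronecker_mul,
          ← Matrix.mul_kronecker_mul, ← Matrix.mul_kronecker_mul]
        rw [Matrix.trace_kronecker, Matrix.trace_kronecker, Matrix.trace_kronecker,
          Matrix.trace_kronecker]
        simp only [Matrix.one_mul]
        rw [htrX₂J₂, htrJ₂X₂, htrX₁J₁, htrJ₁X₁]
        rw [jordan, jordan, Matrix.mul_smul, Matrix.mul_smul, Matrix.trace_smul,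
          Matrix.trace_smul, Matrix.mul_add, Matrix.mul_add, Matrix.trace_add, Matrix.trace_add]
        simp only [smul_eq_mul]
        ring
      rw [hval, Complex.add_re]
  -- conclude by infimum manipulations
  have main : ∀ r₂ ∈ { r : ℝ | ∃ J : Matrix (A₂ × B₂) (A₂ × B₂) ℂ, IsJam J ∧
        trA ((ρ₂ ⊗ₖ (1 : Matrix B₂ B₂ ℂ)) * J) = σ₂ ∧
        r = (Matrix.trace (K₂ * jordan (ρ₂ ⊗ₖ (1 : Matrix B₂ B₂ ℂ)) J)).re },
      cost K₁₂ (ρ₁ ⊗ₖ ρ₂) (σ₁ ⊗ₖ σ₂) - r₂ ≤ cost K₁ ρ₁ σ₁ := by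
    intro r₂ h₂
    refine le_csInf hne₁ fun r₁ h₁ => ?_
    have := key r₁ h₁ r₂ h₂
    linarith
  have main2 : cost K₁₂ (ρ₁ ⊗ₖ ρ₂) (σ₁ ⊗ₖ σ₂) - cost K₁ ρ₁ σ₁ ≤ cost K₂ ρ₂ σ₂ := by
    refine le_csInf hne₂ fun r₂ h₂ => ?_
    have := main r₂ h₂
    linarith
  linarith
end

section
/- Let A be a nonempty finite type of cardinality d, let ρ be a state on A, let ι be a finite type, and let E : ι → Matrix A A ℂ be a family of Kraus operators with Σ_k (E k)* · (E k) = 1. Let J = Σ_k (1 ⊗ₖ E k) · S · (1 ⊗ₖ (E k)*) be the Jamiołkowski matrix of the associated channel. Then Tr( (1 − (1/d) • S) · ((ρ ⊗ₖ 1) ★ J) ) = 1 − (1/d) · Σ_k Re( Tr((E k)*) · Tr((E k) · ρ) ), as complex numbers (the left-hand side is real). -/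
open Matrix
open scoped Kronecker ComplexOrder

private lemma sum3' {α β γ M : Type*} [AddCommMonoid M] [Fintype α] [Fintype β] [Fintype γ]
    (f : α → β → γ → M) :
    ∑ a, ∑ b, ∑ c, f a b c = ∑ b, ∑ c, ∑ a, f a b c := by
  rw [Finset.sum_comm]
  exact Finset.sum_congr rfl fun b _ => Finset.sum_comm

private lemma sum4' {α β γ δ M : Type*} [AddCommMonoid M] [Fintype α] [Fintype β] [Fintype γ]
    [Fintype δ] (f : α → β → γ → δ → M) :
    ∑ a, ∑ b, ∑ c, ∑ d, f a b c d = ∑ d, ∑ a, ∑ b, ∑ c, f a b c d := by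
  calc ∑ a, ∑ b, ∑ c, ∑ d, f a b c d
      = ∑ a, ∑ b, ∑ d, ∑ c, f a b c d :=
        Finset.sum_congr rfl fun a _ => Finset.sum_congr rfl fun b _ => Finset.sum_comm
    _ = ∑ a, ∑ d, ∑ b, ∑ c, f a b c d := Finset.sum_congr rfl fun a _ => Finset.sum_comm
    _ = ∑ d, ∑ a, ∑ b, ∑ c, f a b c d := Finset.sum_comm

private lemma Jentry' {A ι : Type*} [Fintype A] [DecidableEq A] [Fintype ι] (E : ι → Matrix A A ℂ) :
    (∑ m, ((1 : Matrix A A ℂ) ⊗ₖ E m) * swap A * ((1 : Matrix A A ℂ) ⊗ₖ (E m)ᴴ)) =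
    Matrix.of fun p q => ∑ m, E m p.2 q.1 * star (E m q.2 p.1) := by
  ext ⟨i,k⟩ ⟨j,l⟩
  simp [Matrix.sum_apply, mul_apply, _root_.swap, Fintype.sum_prod_type, conjTranspose_apply,
    one_apply, Finset.mul_sum, Finset.sum_mul, ite_and, Finset.sum_ite_eq, Finset.sum_ite_eq']

theorem stmt15 {A ι : Type*} [Fintype A] [Nonempty A] [DecidableEq A] [Fintype ι]
    (ρ : Matrix A A ℂ) (hρ : IsState ρ)
    (E : ι → Matrix A A ℂ) (hE : ∑ k, (E k)ᴴ * E k = 1) :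
    Matrix.trace
        ((1 - ((1 : ℝ) / (Fintype.card A : ℝ)) • swap A) *
          jordan (ρ ⊗ₖ (1 : Matrix A A ℂ))
            (∑ k, ((1 : Matrix A A ℂ) ⊗ₖ E k) * swap A * ((1 : Matrix A A ℂ) ⊗ₖ (E k)ᴴ))) =
      (((1 : ℝ) - (1 / (Fintype.card A : ℝ)) *
          ∑ k, (Matrix.trace ((E k)ᴴ) * Matrix.trace (E k * ρ)).re : ℝ) : ℂ) := by
  rw [Jentry' E]
  set J : Matrix (A × A) (A × A) ℂ :=
    Matrix.of fun p q => ∑ m, E m p.2 q.1 * star (E m q.2 p.1) with hJ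
  set P : Matrix (A × A) (A × A) ℂ := ρ ⊗ₖ (1 : Matrix A A ℂ) with hP
  set c : ℝ := (1 : ℝ) / (Fintype.card A : ℝ) with hc
  -- trace of P * J
  have h1 : trace (P * J) = 1 := by
    have : trace (P * J) = trace (ρ * ∑ m, (E m)ᴴ * E m) := by
      simp only [hP, hJ]
      simp [trace, mul_apply, Fintype.sum_prod_type, one_apply, Matrix.sum_apply,
        conjTranspose_apply, Finset.mul_sum, Finset.sum_mul, mul_ite, ite_mul,
        Finset.sum_ite_eq, Finset.sum_ite_eq', diag]
      refine Finset.sum_congr rfl fun x _ => ?_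
      rw [Finset.sum_comm]
      refine Finset.sum_congr rfl fun a _ => ?_
      rw [Finset.sum_comm]
      exact Finset.sum_congr rfl fun b _ => Finset.sum_congr rfl fun c _ => by ring
    rw [this, hE, mul_one, hρ.2]
  have h2 : trace (swap A * (P * J)) = ∑ m, trace (E m) * trace ((E m)ᴴ * ρ) := by
    simp only [hP, hJ]
    simp [trace, mul_apply, Fintype.sum_prod_type, one_apply, Matrix.sum_apply, _root_.swap,
      conjTranspose_apply, Finset.mul_sum, Finset.sum_mul, mul_ite, ite_mul, ite_and,
      Finset.sum_ite_eq, Finset.sum_ite_eq', diag]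
    refine (sum4' _).trans ?_
    refine Finset.sum_congr rfl fun m _ => ?_
    refine (sum3' _).trans ?_
    rw [Finset.sum_comm]
    exact Finset.sum_congr rfl fun a _ => Finset.sum_congr rfl fun b _ =>
      Finset.sum_congr rfl fun i _ => by ring
  have h3 : trace (swap A * (J * P)) = ∑ m, trace ((E m)ᴴ) * trace (E m * ρ) := by
    simp only [hP, hJ]
    simp [trace, mul_apply, Fintype.sum_prod_type, one_apply, Matrix.sum_apply, _root_.swap,
      conjTranspose_apply, Finset.mul_sum, Finset.sum_mul, mul_ite, ite_mul, ite_and,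
      Finset.sum_ite_eq, Finset.sum_ite_eq', diag]
    refine (sum4' _).trans ?_
    refine Finset.sum_congr rfl fun m _ => Finset.sum_congr rfl fun x _ => ?_
    rw [Finset.sum_comm]
    exact Finset.sum_congr rfl fun a _ => Finset.sum_congr rfl fun b _ => by ring
  -- conjugation relation
  have hherm : ρᴴ = ρ := hρ.1.1
  have hconj : ∀ m, trace (E m) * trace ((E m)ᴴ * ρ) =
      star (trace ((E m)ᴴ) * trace (E m * ρ)) := by
    intro m
    rw [star_mul']
    congr 1
    · rw [← trace_conjTranspose, conjTranspose_conjTranspose]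
    · rw [← trace_conjTranspose, conjTranspose_mul, hherm, trace_mul_comm]
  -- expand
  have expand : trace ((1 - c • swap A) * jordan P J) =
      trace (P * J) - c • ((2:ℂ)⁻¹ * (trace (swap A * (P * J)) + trace (swap A * (J * P)))) := by
    simp only [jordan, sub_mul, one_mul, smul_mul_assoc, trace_sub, trace_smul, mul_add,
      Matrix.mul_smul, trace_smul, smul_eq_mul, Matrix.mul_add, trace_add]
    have : trace (J * P) = trace (P * J) := trace_mul_comm J P
    rw [this]
    ring_nf
  rw [expand, h1, h2, h3]
  simp only [hconj]
  have key : (∑ m, star (trace ((E m)ᴴ) * trace (E m * ρ))) +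
      ∑ m, trace ((E m)ᴴ) * trace (E m * ρ) =
      2 * ∑ m, ((trace ((E m)ᴴ) * trace (E m * ρ)).re : ℂ) := by
    rw [← Finset.sum_add_distrib, Finset.mul_sum]
    refine Finset.sum_congr rfl fun m _ => ?_
    rw [add_comm]
    rw [show star ((E m)ᴴ.trace * (E m * ρ).trace) =
      (starRingEnd ℂ) ((E m)ᴴ.trace * (E m * ρ).trace) from rfl, Complex.add_conj]
    push_cast
    ring
  rw [key]
  rw [Complex.real_smul]
  push_cast
  ring
end

section
/- Let d ≥ 2 be a natural number and work with complex matrices indexed by Fin d. Let α ∈ ℝ with 0 ≤ α ≤ 1, let ρ = |e₀⟩⟨e₀| be the rank-one projection onto the first standard basis vector, and let σ = |φ⟩⟨φ| with φ = α·e₀ + √(1−α²)·e₁. Then sInf { Re Tr( (d • 1 − S) · ((ρ ⊗ₖ 1) ★ J) ) : J a Jamiołkowski matrix from Fin d to Fin d with Tr_A((ρ ⊗ₖ 1)·J) = σ } = (1 − α)·(d + 2α). -/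
open Matrix
open scoped Kronecker ComplexOrder

section Helpers

variable {d : ℕ}

private lemma hPJ (z : Fin d) (ρ : Matrix (Fin d) (Fin d) ℂ)
    (hρ : ∀ i j, ρ i j = (if i = z then 1 else 0) * if j = z then 1 else 0)
    (J : Matrix (Fin d × Fin d) (Fin d × Fin d) ℂ) (p q : Fin d × Fin d) :
    ((ρ ⊗ₖ (1 : Matrix (Fin d) (Fin d) ℂ)) * J) p q
      = if p.1 = z then J (z, p.2) q else 0 := by
  rw [Matrix.mul_apply]
  have h : ∀ r : Fin d × Fin d, (ρ ⊗ₖ (1 : Matrix (Fin d) (Fin d) ℂ)) p r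
      = if p.1 = z then (if r = (z, p.2) then 1 else 0) else 0 := by
    intro r
    simp only [Matrix.kroneckerMap_apply, hρ, Matrix.one_apply, Prod.ext_iff]
    rcases r with ⟨r1, r2⟩
    by_cases h1 : p.1 = z <;> by_cases h2 : r1 = z <;> by_cases h3 : p.2 = r2 <;>
      simp [h1, h2, h3, eq_comm] <;> simp_all [eq_comm]
  simp only [h]
  by_cases h1 : p.1 = z <;> simp [h1, Finset.sum_ite_eq]

private lemma hJP (z : Fin d) (ρ : Matrix (Fin d) (Fin d) ℂ)
    (hρ : ∀ i j, ρ i j = (if i = z then 1 else 0) * if j = z then 1 else 0)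
    (J : Matrix (Fin d × Fin d) (Fin d × Fin d) ℂ) (p q : Fin d × Fin d) :
    (J * (ρ ⊗ₖ (1 : Matrix (Fin d) (Fin d) ℂ))) p q
      = if q.1 = z then J p (z, q.2) else 0 := by
  rw [Matrix.mul_apply]
  have h : ∀ r : Fin d × Fin d, (ρ ⊗ₖ (1 : Matrix (Fin d) (Fin d) ℂ)) r q
      = if q.1 = z then (if r = (z, q.2) then 1 else 0) else 0 := by
    intro r
    simp only [Matrix.kroneckerMap_apply, hρ, Matrix.one_apply, Prod.ext_iff]
    rcases r with ⟨r1, r2⟩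
    by_cases h1 : q.1 = z <;> by_cases h2 : r1 = z <;> by_cases h3 : r2 = q.2 <;>
      simp [h1, h2, h3, eq_comm] <;> simp_all [eq_comm]
  simp only [h]
  by_cases h1 : q.1 = z <;> simp [h1, Finset.sum_ite_eq]

private lemma trace_swap_mul (M : Matrix (Fin d × Fin d) (Fin d × Fin d) ℂ) :
    Matrix.trace (swap (Fin d) * M) = ∑ p : Fin d × Fin d, M (p.2, p.1) p := by
  simp only [Matrix.trace, Matrix.diag, Matrix.mul_apply]
  congr 1; funext p
  have h : ∀ q : Fin d × Fin d, swap (Fin d) p q = if q = (p.2, p.1) then 1 else 0 := by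
    intro q; rcases q with ⟨q1, q2⟩
    simp only [_root_.swap, Matrix.of_apply, Prod.ext_iff]
    by_cases h1 : p.1 = q2 <;> by_cases h2 : p.2 = q1 <;> simp [h1, h2, eq_comm] <;>
      simp_all [eq_comm]
  simp only [h]
  simp [Finset.sum_ite_eq]

private lemma traceFormula (z : Fin d) (ρ : Matrix (Fin d) (Fin d) ℂ)
    (hρ : ∀ i j, ρ i j = (if i = z then 1 else 0) * if j = z then 1 else 0)
    (J : Matrix (Fin d × Fin d) (Fin d × Fin d) ℂ) :
    Matrix.trace ((d • (1 : Matrix (Fin d × Fin d) (Fin d × Fin d) ℂ) - swap (Fin d)) *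
        jordan (ρ ⊗ₖ (1 : Matrix (Fin d) (Fin d) ℂ)) J)
      = d * (∑ k, J (z,k) (z,k))
        - 2⁻¹ * ((∑ i, J (z,i) (i,z)) + (∑ i, J (i,z) (z,i))) := by
  set P := ρ ⊗ₖ (1 : Matrix (Fin d) (Fin d) ℂ) with hP
  have tPJ : Matrix.trace (P * J) = ∑ k, J (z,k) (z,k) := by
    simp only [Matrix.trace, Matrix.diag, hP, hPJ z ρ hρ J]
    rw [Fintype.sum_prod_type]
    simp [Finset.sum_ite_eq]
  have tJP : Matrix.trace (J * P) = ∑ k, J (z,k) (z,k) := by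
    simp only [Matrix.trace, Matrix.diag, hP, hJP z ρ hρ J]
    rw [Fintype.sum_prod_type]
    simp [Finset.sum_ite_eq]
  have tSPJ : Matrix.trace (swap (Fin d) * (P * J)) = ∑ i, J (z,i) (i,z) := by
    rw [trace_swap_mul]
    simp only [hP, hPJ z ρ hρ J]
    rw [Fintype.sum_prod_type]
    simp [Finset.sum_ite_eq]
  have tSJP : Matrix.trace (swap (Fin d) * (J * P)) = ∑ k, J (k,z) (z,k) := by
    rw [trace_swap_mul]
    simp only [hP, hJP z ρ hρ J]
    rw [Fintype.sum_prod_type]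
    rw [Finset.sum_comm]
    simp [Finset.sum_ite_eq]
  have expand : (d • (1 : Matrix (Fin d × Fin d) (Fin d × Fin d) ℂ) - swap (Fin d)) *
        jordan P J = (2:ℂ)⁻¹ • ((d • (P * J) + d • (J * P))
          - (swap (Fin d) * (P * J) + swap (Fin d) * (J * P))) := by
    simp only [jordan, Matrix.sub_mul, Matrix.mul_smul, Matrix.smul_mul, Matrix.mul_add,
      Matrix.one_mul, Matrix.add_mul, smul_sub, smul_add]
    module
  rw [expand]
  simp only [Matrix.trace_smul, Matrix.trace_sub, Matrix.trace_add, Matrix.trace_smul,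
    tPJ, tJP, tSPJ, tSJP]
  have : ∑ i, J (i,z) (z,i) = ∑ k, J (k,z) (z,k) := rfl
  rw [← this]
  simp only [smul_eq_mul, nsmul_eq_mul]
  push_cast
  ring

private lemma trA_PJ (z : Fin d) (ρ : Matrix (Fin d) (Fin d) ℂ)
    (hρ : ∀ i j, ρ i j = (if i = z then 1 else 0) * if j = z then 1 else 0)
    (J : Matrix (Fin d × Fin d) (Fin d × Fin d) ℂ) (k l : Fin d) :
    trA ((ρ ⊗ₖ (1 : Matrix (Fin d) (Fin d) ℂ)) * J) k l = J (z, k) (z, l) := by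
  simp only [trA, Matrix.of_apply, hPJ z ρ hρ J]
  simp [Finset.sum_ite_eq]

private lemma sum_two {M : Type*} [AddCommMonoid M] (z o : Fin d) (hzo : z ≠ o) (f : Fin d → M)
    (hf : ∀ k, k ≠ z → k ≠ o → f k = 0) :
    ∑ k, f k = f z + f o := by
  have h : ∀ k, f k = (if k = z then f z else 0) + (if k = o then f o else 0) := by
    intro k
    by_cases h1 : k = z
    · subst h1; simp [hzo]
    · by_cases h2 : k = o
      · subst h2; simp [h1]
      · simp [h1, h2, hf k h1 h2]
  rw [Finset.sum_congr rfl fun k _ => h k]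
  rw [Finset.sum_add_distrib]
  simp [Finset.sum_ite_eq]

open scoped InnerProductSpace in
private lemma gram_exists (L : Matrix (Fin d × Fin d) (Fin d × Fin d) ℂ) (hL : L.PosSemidef) :
    ∃ b : Fin d × Fin d → EuclideanSpace ℂ (Fin d × Fin d),
      ∀ p q, ⟪b p, b q⟫_ℂ = L p q := by
  obtain ⟨B, hB⟩ : ∃ B : Matrix (Fin d × Fin d) (Fin d × Fin d) ℂ, L = Bᴴ * B := by
    open scoped MatrixOrder in
    obtain ⟨B, hB⟩ := CStarAlgebra.nonneg_iff_eq_star_mul_self.mp hL.nonneg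
    exact ⟨B, hB⟩
  refine ⟨fun p => (WithLp.toLp 2 (fun r => B r p) : EuclideanSpace ℂ (Fin d × Fin d)), fun p q => ?_⟩
  rw [hB]
  simp [PiLp.inner_apply, Matrix.mul_apply, Matrix.conjTranspose_apply, RCLike.inner_apply,
    mul_comm]

private lemma psd_vecMulVec (v : Fin d × Fin d → ℂ) :
    (Matrix.vecMulVec v (star v)).PosSemidef := by
  have h : Matrix.vecMulVec v (star v)
      = (Matrix.replicateRow Unit (star v))ᴴ * Matrix.replicateRow Unit (star v) := by
    ext p q
    simp [Matrix.vecMulVec_apply, Matrix.mul_apply, Matrix.conjTranspose_apply,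
      Matrix.replicateRow_apply, mul_comm]
  rw [h]
  exact Matrix.posSemidef_conjTranspose_mul_self _

private lemma key_ineq (α β s t x y : ℝ) (hα0 : 0 ≤ α) (hβ2 : β ^ 2 = 1 - α ^ 2)
    (hs : 0 ≤ s) (ht : 0 ≤ t)
    (hx1 : |x| ≤ s * α) (hx2 : β * x = -(α * y)) (hy : |y| ≤ α * t)
    (hst : s ^ 2 + t ^ 2 ≤ 1) : x ≤ α ^ 2 := by
  have h1 : x ^ 2 ≤ s ^ 2 * α ^ 2 := by
    nlinarith [mul_self_le_mul_self (abs_nonneg x) hx1, sq_abs x]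
  have h2 : β ^ 2 * x ^ 2 ≤ α ^ 2 * (α ^ 2 * t ^ 2) := by
    have hy2 : y ^ 2 ≤ α ^ 2 * t ^ 2 := by
      nlinarith [mul_self_le_mul_self (abs_nonneg y) hy, sq_abs y]
    have : (β * x) ^ 2 = α ^ 2 * y ^ 2 := by rw [hx2]; ring
    nlinarith [mul_le_mul_of_nonneg_left hy2 (sq_nonneg α)]
  have h3 : x ^ 2 ≤ α ^ 4 := by
    have e1 : α ^ 2 * x ^ 2 ≤ α ^ 2 * (s ^ 2 * α ^ 2) :=
      mul_le_mul_of_nonneg_left h1 (sq_nonneg α)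
    have e2 : α ^ 4 * (s ^ 2 + t ^ 2) ≤ α ^ 4 * 1 :=
      mul_le_mul_of_nonneg_left hst (by positivity)
    nlinarith
  nlinarith [sq_nonneg (x - α ^ 2), sq_nonneg (x + α ^ 2), sq_nonneg α, pow_nonneg hα0 2]

end Helpers

theorem stmt17 (d : ℕ) (hd : 2 ≤ d) (α : ℝ) (hα0 : 0 ≤ α) (hα1 : α ≤ 1)
    (e₀ : Fin d → ℂ) (he₀ : e₀ = fun i => if i = (⟨0, by omega⟩ : Fin d) then 1 else 0)
    (φ : Fin d → ℂ)
    (hφ : φ = fun i => if i = (⟨0, by omega⟩ : Fin d) then (α : ℂ)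
        else if i = (⟨1, by omega⟩ : Fin d) then ((Real.sqrt (1 - α ^ 2) : ℝ) : ℂ) else 0)
    (ρ σ : Matrix (Fin d) (Fin d) ℂ)
    (hρ : ρ = Matrix.vecMulVec e₀ (star e₀))
    (hσ : σ = Matrix.vecMulVec φ (star φ)) :
    sInf { r : ℝ | ∃ J : Matrix (Fin d × Fin d) (Fin d × Fin d) ℂ, IsJam J ∧
        trA ((ρ ⊗ₖ (1 : Matrix (Fin d) (Fin d) ℂ)) * J) = σ ∧
        r = (Matrix.trace
          ((d • (1 : Matrix (Fin d × Fin d) (Fin d × Fin d) ℂ) - swap (Fin d)) *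
            jordan (ρ ⊗ₖ (1 : Matrix (Fin d) (Fin d) ℂ)) J)).re } =
      (1 - α) * (d + 2 * α) := by
  have hzlt : (0:ℕ) < d := by omega
  obtain ⟨z, hz⟩ : ∃ z : Fin d, z = (⟨0, by omega⟩ : Fin d) := ⟨_, rfl⟩
  obtain ⟨o, ho⟩ : ∃ o : Fin d, o = (⟨1, by omega⟩ : Fin d) := ⟨_, rfl⟩
  have hzo : z ≠ o := by subst hz ho; simp [Fin.ext_iff]
  set β := Real.sqrt (1 - α ^ 2) with hβdef
  have hβ2 : β ^ 2 = 1 - α ^ 2 := Real.sq_sqrt (by nlinarith)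
  have hβ0 : 0 ≤ β := Real.sqrt_nonneg _
  have hφz : φ z = (α : ℂ) := by rw [hφ, hz]; simp
  have hφo : φ o = (β : ℂ) := by rw [hφ, ho]; norm_num [Fin.ext_iff]
  have hφk : ∀ k, k ≠ z → k ≠ o → φ k = 0 := by
    intro k h1 h2
    rw [hφ]
    simp only []
    rw [if_neg (by rw [← hz]; exact h1), if_neg (by rw [← ho]; exact h2)]
  have hρ' : ∀ i j, ρ i j = (if i = z then 1 else 0) * if j = z then 1 else 0 := by
    intro i j
    rw [hρ]
    simp only [Matrix.vecMulVec_apply, Pi.star_apply, he₀, ← hz]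
    by_cases h1 : i = z <;> by_cases h2 : j = z <;> simp [h1, h2]
  have hσ' : ∀ k l, σ k l = φ k * (starRingEnd ℂ) (φ l) := by
    intro k l
    rw [hσ]
    simp [Matrix.vecMulVec_apply]
  have hαβ : α ^ 2 + β ^ 2 = 1 := by rw [hβ2]; ring
  have hsum1 : (∑ k, φ k * (starRingEnd ℂ) (φ k)) = 1 := by
    rw [sum_two z o hzo _ (fun k h1 h2 => by rw [hφk k h1 h2]; ring)]
    rw [hφz, hφo]
    simp only [Complex.conj_ofReal]
    rw [← Complex.ofReal_mul, ← Complex.ofReal_mul, ← Complex.ofReal_add,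
      ← Complex.ofReal_one]
    norm_cast
    nlinarith
  refine IsLeast.csInf_eq ⟨?_, ?_⟩
  · -- membership: explicit optimizer
    classical
    set v : Fin d × Fin d → ℂ := fun p =>
      if p.1 = z then φ p.2
      else if p.1 = o then (if p.2 = z then -(β:ℂ) else if p.2 = o then (α:ℂ) else 0)
      else if p.2 = p.1 then 1 else 0 with hv
    have hvz : ∀ k, v (z, k) = φ k := by intro k; simp [hv]
    have hvoz : v (o, z) = -(β:ℂ) := by simp [hv, Ne.symm hzo]
    have hvoo : v (o, o) = (α:ℂ) := by simp [hv, Ne.symm hzo, hzo]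
    have hvok : ∀ k, k ≠ z → k ≠ o → v (o, k) = 0 := by
      intro k h1 h2; simp [hv, Ne.symm hzo, h1, h2]
    have hvik : ∀ i k, i ≠ z → i ≠ o → v (i, k) = if k = i then 1 else 0 := by
      intro i k h1 h2; simp [hv, h1, h2]
    set J₀ : Matrix (Fin d × Fin d) (Fin d × Fin d) ℂ :=
      ptA (Matrix.vecMulVec v (star v)) with hJ₀def
    have hJ₀ : ∀ p q : Fin d × Fin d,
        J₀ p q = v (q.1, p.2) * (starRingEnd ℂ) (v (p.1, q.2)) := fun p q => rfl
    have hpt : ptA J₀ = Matrix.vecMulVec v (star v) := rfl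
    have keysum : ∀ i j : Fin d,
        (∑ k, v (j, k) * (starRingEnd ℂ) (v (i, k))) = if i = j then 1 else 0 := by
      intro i j
      by_cases hi : i = z
      · by_cases hj : j = z
        · rw [hi, hj, if_pos rfl]
          simp only [hvz]
          exact hsum1
        · by_cases hj2 : j = o
          · rw [hi, hj2, if_neg hzo]
            rw [sum_two z o hzo _ (fun k h1 h2 => by rw [hvok k h1 h2]; ring)]
            rw [hvoz, hvoo, hvz, hvz, hφz, hφo]
            simp only [Complex.conj_ofReal]
            ring
          · rw [hi, if_neg (fun h => hj h.symm)]
            rw [Finset.sum_eq_single_of_mem j (Finset.mem_univ j)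
              (fun k _ hk => by rw [hvik j k hj hj2, if_neg hk]; simp)]
            rw [hvik j j hj hj2, if_pos rfl, hvz, hφk j hj hj2]
            simp
      · by_cases hi2 : i = o
        · by_cases hj : j = z
          · rw [hi2, hj, if_neg (Ne.symm hzo)]
            rw [sum_two z o hzo _ (fun k h1 h2 => by rw [hvok k h1 h2]; simp)]
            rw [hvz, hvz, hφz, hφo, hvoz, hvoo]
            simp only [Complex.conj_ofReal, map_neg]
            ring
          · by_cases hj2 : j = o
            · rw [hi2, hj2, if_pos rfl]
              rw [sum_two z o hzo _ (fun k h1 h2 => by rw [hvok k h1 h2]; ring)]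
              rw [hvoz, hvoo]
              simp only [Complex.conj_ofReal, map_neg]
              rw [show ((-(β:ℂ)) * -(β:ℂ) + (α:ℂ) * (α:ℂ)) = ((β^2 + α^2 : ℝ) : ℂ) by
                push_cast; ring]
              rw [show β ^ 2 + α ^ 2 = 1 by linarith [hαβ]]
              norm_num
            · rw [hi2, if_neg (fun h => hj2 h.symm)]
              rw [Finset.sum_eq_single_of_mem j (Finset.mem_univ j)
                (fun k _ hk => by rw [hvik j k hj hj2, if_neg hk]; simp)]
              rw [hvik j j hj hj2, if_pos rfl, hvok j hj hj2]
              simp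
        · by_cases hj : j = z
          · rw [hj, if_neg hi]
            rw [Finset.sum_eq_single_of_mem i (Finset.mem_univ i)
              (fun k _ hk => by rw [hvik i k hi hi2, if_neg hk]; simp)]
            rw [hvik i i hi hi2, if_pos rfl, hvz, hφk i hi hi2]
            simp
          · by_cases hj2 : j = o
            · rw [hj2, if_neg hi2]
              rw [Finset.sum_eq_single_of_mem i (Finset.mem_univ i)
                (fun k _ hk => by rw [hvik i k hi hi2, if_neg hk]; simp)]
              rw [hvik i i hi hi2, if_pos rfl, hvok i hi hi2]
              simp
            · by_cases hij : i = j
              · rw [hij, if_pos rfl]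
                rw [Finset.sum_eq_single_of_mem j (Finset.mem_univ j)
                  (fun k _ hk => by rw [hvik j k hj hj2, if_neg hk]; simp)]
                rw [hvik j j hj hj2, if_pos rfl]
                simp
              · rw [if_neg hij]
                rw [Finset.sum_eq_single_of_mem j (Finset.mem_univ j)
                  (fun k _ hk => by rw [hvik j k hj hj2, if_neg hk]; simp)]
                rw [hvik j j hj hj2, if_pos rfl, hvik i j hi hi2,
                  if_neg (fun h => hij h.symm)]
                simp
    refine ⟨J₀, ⟨?_, ?_⟩, ?_, ?_⟩
    · rw [hpt]; exact psd_vecMulVec v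
    · ext i j
      simp only [trB, Matrix.of_apply]
      rw [show (∑ k, J₀ (i, k) (j, k)) = ∑ k, v (j, k) * (starRingEnd ℂ) (v (i, k)) from
        Finset.sum_congr rfl fun k _ => hJ₀ (i,k) (j,k)]
      rw [keysum i j, Matrix.one_apply]
    · ext k l
      rw [trA_PJ z ρ hρ' J₀ k l, hJ₀ (z,k) (z,l), hvz, hvz, hσ' k l]
    · rw [traceFormula z ρ hρ' J₀]
      have T1 : (∑ k, J₀ (z,k) (z,k)) = 1 := by
        rw [show (∑ k, J₀ (z,k) (z,k)) = ∑ k, v (z, k) * (starRingEnd ℂ) (v (z, k)) from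
          Finset.sum_congr rfl fun k _ => hJ₀ (z,k) (z,k)]
        simp only [hvz]; exact hsum1
      have hdiagv : (∑ i, v (i, i)) = ((d - 2 + 2 * α : ℝ) : ℂ) := by
        have h : ∀ i : Fin d, v (i, i)
            = 1 + ((if i = z then ((α:ℂ) - 1) else 0) + (if i = o then ((α:ℂ) - 1) else 0)) := by
          intro i
          by_cases h1 : i = z
          · rw [h1, hvz, hφz, if_pos rfl, if_neg hzo]; ring
          · by_cases h2 : i = o
            · rw [h2, hvoo, if_neg (Ne.symm hzo), if_pos rfl]; ring
            · rw [hvik i i h1 h2, if_pos rfl, if_neg h1, if_neg h2]; ring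
        rw [Finset.sum_congr rfl fun i _ => h i]
        rw [Finset.sum_add_distrib, Finset.sum_add_distrib]
        simp only [Finset.sum_const, Finset.card_univ, Fintype.card_fin, nsmul_eq_mul,
          mul_one, Finset.sum_ite_eq', Finset.mem_univ, if_pos]
        push_cast
        ring
      have S1 : (∑ i, J₀ (z,i) (i,z)) = ((α * (d - 2 + 2 * α) : ℝ) : ℂ) := by
        rw [show (∑ i, J₀ (z,i) (i,z)) = ∑ i, v (i, i) * (starRingEnd ℂ) (v (z, z)) from
          Finset.sum_congr rfl fun i _ => hJ₀ (z,i) (i,z)]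
        rw [← Finset.sum_mul, hdiagv, hvz, hφz]
        simp only [Complex.conj_ofReal]
        push_cast
        ring
      have S2 : (∑ i, J₀ (i,z) (z,i)) = ((α * (d - 2 + 2 * α) : ℝ) : ℂ) := by
        have h : ∀ i : Fin d, J₀ (i,z) (z,i) = (starRingEnd ℂ) (J₀ (z,i) (i,z)) := by
          intro i
          rw [hJ₀ (i,z) (z,i), hJ₀ (z,i) (i,z)]
          rw [_root_.map_mul, RingHomInvPair.comp_apply_eq₂]
          ring
        rw [Finset.sum_congr rfl fun i _ => h i, ← map_sum, S1, Complex.conj_ofReal]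
      rw [T1, S1, S2]
      rw [show ((d:ℂ) * 1 - 2⁻¹ * (((α * (d - 2 + 2 * α) : ℝ) : ℂ) + ((α * (d - 2 + 2 * α) : ℝ) : ℂ)))
          = (((1 - α) * (d + 2 * α) : ℝ) : ℂ) by push_cast; ring]
      rw [Complex.ofReal_re]
  · -- lower bound
    rintro r ⟨J, ⟨hpsd, htrB⟩, hcon, hr⟩
    have hconE : ∀ k l, J (z,k) (z,l) = σ k l := by
      intro k l
      rw [← trA_PJ z ρ hρ' J k l, hcon]
    have htrBE : ∀ i j : Fin d, (∑ k, J (i,k) (j,k)) = if i = j then 1 else 0 := by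
      intro i j
      have := congrFun (congrFun htrB i) j
      simpa [trB, Matrix.one_apply] using this
    obtain ⟨b, hb⟩ := gram_exists (ptA J) hpsd
    have hbJ : ∀ p q : Fin d × Fin d,
        (inner ℂ (b p) (b q) : ℂ) = J (q.1, p.2) (p.1, q.2) := fun p q => hb p q
    have innersq : ∀ x : EuclideanSpace ℂ (Fin d × Fin d), (inner ℂ x x : ℂ).re = ‖x‖ ^ 2 := by
      intro x
      rw [inner_self_eq_norm_sq_to_K (𝕜 := ℂ)]
      norm_cast
    have reinner : ∀ x y : EuclideanSpace ℂ (Fin d × Fin d),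
        (inner ℂ x y : ℂ).re ≤ ‖x‖ * ‖y‖ := by
      intro x y
      have h := re_inner_le_norm (𝕜 := ℂ) x y
      simpa [RCLike.re_to_complex] using h
    -- basic Gram facts
    have g00 : (inner ℂ (b (z,z)) (b (z,z)) : ℂ) = (α:ℂ) * (α:ℂ) := by
      rw [hbJ, hconE, hσ', hφz, Complex.conj_ofReal]
    have g01 : (inner ℂ (b (z,z)) (b (z,o)) : ℂ) = (α:ℂ) * (β:ℂ) := by
      rw [hbJ, hconE, hσ', hφz, hφo, Complex.conj_ofReal]
    have g10 : (inner ℂ (b (z,o)) (b (z,z)) : ℂ) = (β:ℂ) * (α:ℂ) := by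
      rw [hbJ, hconE, hσ', hφz, hφo, Complex.conj_ofReal]
    have g11 : (inner ℂ (b (z,o)) (b (z,o)) : ℂ) = (β:ℂ) * (β:ℂ) := by
      rw [hbJ, hconE, hσ', hφo, Complex.conj_ofReal]
    have bzk : ∀ k, k ≠ z → k ≠ o → b (z,k) = 0 := by
      intro k h1 h2
      have h : (inner ℂ (b (z,k)) (b (z,k)) : ℂ) = 0 := by
        rw [hbJ, hconE, hσ', hφk k h1 h2]; ring
      exact inner_self_eq_zero.mp h
    have n00 : ‖b (z,z)‖ = α := by
      have h : ‖b (z,z)‖ ^ 2 = α ^ 2 := by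
        rw [← innersq (b (z,z)), g00, ← Complex.ofReal_mul, Complex.ofReal_re]
        ring
      rw [← Real.sqrt_sq (norm_nonneg _), h, Real.sqrt_sq hα0]
    have diag : ∀ i : Fin d, (∑ k, ‖b (i,k)‖ ^ 2) = 1 := by
      intro i
      have h : (∑ k, (inner ℂ (b (i,k)) (b (i,k)) : ℂ)) = 1 := by
        rw [Finset.sum_congr rfl fun k _ => hbJ (i,k) (i,k)]
        simpa using htrBE i i
      have h2 : (∑ k, (inner ℂ (b (i,k)) (b (i,k)) : ℂ).re) = 1 := by
        rw [← Complex.re_sum, h, Complex.one_re]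
      rw [← h2]
      exact Finset.sum_congr rfl fun k _ => (innersq (b (i,k))).symm
    have normle : ∀ i k, ‖b (i,k)‖ ^ 2 ≤ 1 := by
      intro i k
      rw [← diag i]
      exact Finset.single_le_sum (fun k _ => sq_nonneg ‖b (i,k)‖) (Finset.mem_univ k)
    have orth : (inner ℂ (b (z,z)) (b (o,z)) : ℂ) + inner ℂ (b (z,o)) (b (o,o)) = 0 := by
      have h : (∑ k, (inner ℂ (b (z,k)) (b (o,k)) : ℂ)) = 0 := by
        rw [Finset.sum_congr rfl fun k _ => hbJ (z,k) (o,k)]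
        simpa [Ne.symm hzo] using htrBE o z
      rw [← h]
      exact (sum_two z o hzo (fun k => (inner ℂ (b (z,k)) (b (o,k)) : ℂ)) (fun k h1 h2 => by
        show (inner ℂ (b (z,k)) (b (o,k)) : ℂ) = 0
        rw [bzk k h1 h2, inner_zero_left])).symm
    have hrel : ((β:ℂ)) • b (z,z) = ((α:ℂ)) • b (z,o) := by
      rw [← sub_eq_zero, ← inner_self_eq_zero (𝕜 := ℂ)]
      rw [inner_sub_left, inner_sub_right, inner_sub_right]
      rw [inner_smul_left, inner_smul_left, inner_smul_left, inner_smul_left,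
        inner_smul_right, inner_smul_right, inner_smul_right, inner_smul_right]
      rw [g00, g01, g10, g11]
      simp only [Complex.conj_ofReal]
      ring
    -- rewrite the cost
    rw [traceFormula z ρ hρ' J] at hr
    have T1 : (∑ k, J (z,k) (z,k)) = 1 := by
      rw [Finset.sum_congr rfl fun k _ => hconE k k,
        Finset.sum_congr rfl fun k _ => hσ' k k, hsum1]
    set c : ℂ := ∑ i, (inner ℂ (b (i,i)) (b (z,z)) : ℂ) with hc
    have S1 : (∑ i, J (z,i) (i,z)) = c := by
      rw [hc]
      exact Finset.sum_congr rfl fun i _ => (hbJ (i,i) (z,z)).symm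
    have S2 : (∑ i, J (i,z) (z,i)) = (starRingEnd ℂ) c := by
      rw [hc, map_sum]
      refine Finset.sum_congr rfl fun i _ => ?_
      rw [← inner_conj_symm (b (i,i)) (b (z,z))]
      rw [RingHomInvPair.comp_apply_eq₂]
      exact (hbJ (z,z) (i,i)).symm
    rw [T1, S1, S2] at hr
    have hre : r = d - c.re := by
      rw [hr, Complex.add_conj]
      rw [show ((d:ℂ) * 1 - 2⁻¹ * ((2 * c.re : ℝ) : ℂ)) = (((d:ℝ) - c.re : ℝ) : ℂ) by
        push_cast; ring]
      rw [Complex.ofReal_re]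
    -- bound each inner product
    have hbound : ∀ i : Fin d, (inner ℂ (b (i,i)) (b (z,z)) : ℂ).re
        ≤ if i = z then α ^ 2 else if i = o then α ^ 2 else α := by
      intro i
      by_cases h1 : i = z
      · rw [if_pos h1, h1, g00, ← Complex.ofReal_mul, Complex.ofReal_re]
        nlinarith
      · by_cases h2 : i = o
        · rw [if_neg h1, if_pos h2, h2]
          have hni : ‖b (o,o)‖ ^ 2 + ‖b (o,z)‖ ^ 2 ≤ 1 := by
            rw [← diag o]
            have hsub : ({o, z} : Finset (Fin d)) ⊆ Finset.univ := Finset.subset_univ _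
            calc ‖b (o,o)‖ ^ 2 + ‖b (o,z)‖ ^ 2
                = ∑ k ∈ ({o, z} : Finset (Fin d)), ‖b (o,k)‖ ^ 2 := by
                  rw [Finset.sum_pair (Ne.symm hzo)]
              _ ≤ ∑ k, ‖b (o,k)‖ ^ 2 :=
                  Finset.sum_le_sum_of_subset_of_nonneg hsub (fun k _ _ => sq_nonneg _)
          have hx1 : |(inner ℂ (b (o,o)) (b (z,z)) : ℂ).re| ≤ ‖b (o,o)‖ * α := by
            calc |(inner ℂ (b (o,o)) (b (z,z)) : ℂ).re| ≤ ‖(inner ℂ (b (o,o)) (b (z,z)) : ℂ)‖ :=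
                Complex.abs_re_le_norm _
              _ ≤ ‖b (o,o)‖ * ‖b (z,z)‖ := norm_inner_le_norm _ _
              _ = ‖b (o,o)‖ * α := by rw [n00]
          have hy1 : |(inner ℂ (b (z,z)) (b (o,z)) : ℂ).re| ≤ α * ‖b (o,z)‖ := by
            calc |(inner ℂ (b (z,z)) (b (o,z)) : ℂ).re| ≤ ‖(inner ℂ (b (z,z)) (b (o,z)) : ℂ)‖ :=
                Complex.abs_re_le_norm _
              _ ≤ ‖b (z,z)‖ * ‖b (o,z)‖ := norm_inner_le_norm _ _
              _ = α * ‖b (o,z)‖ := by rw [n00]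
          have hx2c : (β:ℂ) * inner ℂ (b (o,o)) (b (z,z))
              = -((α:ℂ) * (starRingEnd ℂ) (inner ℂ (b (z,z)) (b (o,z)))) := by
            calc (β:ℂ) * (inner ℂ (b (o,o)) (b (z,z)) : ℂ)
                = inner ℂ (b (o,o)) (((β:ℂ)) • b (z,z)) := by rw [inner_smul_right]
              _ = inner ℂ (b (o,o)) (((α:ℂ)) • b (z,o)) := by rw [hrel]
              _ = (α:ℂ) * inner ℂ (b (o,o)) (b (z,o)) := by rw [inner_smul_right]
              _ = (α:ℂ) * (starRingEnd ℂ) (inner ℂ (b (z,o)) (b (o,o))) := by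
                  rw [inner_conj_symm]
              _ = (α:ℂ) * (starRingEnd ℂ) (-(inner ℂ (b (z,z)) (b (o,z)) : ℂ)) := by
                  rw [show (inner ℂ (b (z,o)) (b (o,o)) : ℂ)
                    = -(inner ℂ (b (z,z)) (b (o,z)) : ℂ) by linear_combination orth]
              _ = -((α:ℂ) * (starRingEnd ℂ) (inner ℂ (b (z,z)) (b (o,z)))) := by
                  rw [map_neg]; ring
          have hx2 : β * (inner ℂ (b (o,o)) (b (z,z)) : ℂ).re
              = -(α * (inner ℂ (b (z,z)) (b (o,z)) : ℂ).re) := by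
            have h := congrArg Complex.re hx2c
            simp [Complex.mul_re, Complex.ofReal_re, Complex.ofReal_im, Complex.neg_re,
              Complex.conj_re, Complex.conj_im] at h
            rw [h, ← Complex.conj_re (inner ℂ (b (o,z)) (b (z,z))), inner_conj_symm]
          exact key_ineq α β ‖b (o,o)‖ ‖b (o,z)‖ _ _ hα0 hβ2 (norm_nonneg _)
            (norm_nonneg _) hx1 hx2 hy1 hni
        · rw [if_neg h1, if_neg h2]
          calc (inner ℂ (b (i,i)) (b (z,z)) : ℂ).re ≤ ‖b (i,i)‖ * ‖b (z,z)‖ :=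
              reinner _ _
            _ = ‖b (i,i)‖ * α := by rw [n00]
            _ ≤ 1 * α := by
                have h3 : ‖b (i,i)‖ ≤ 1 := by nlinarith [normle i i, norm_nonneg (b (i,i))]
                exact mul_le_mul_of_nonneg_right h3 hα0
            _ = α := one_mul α
    have csum : c.re ≤ 2 * α ^ 2 + (d - 2) * α := by
      rw [hc, Complex.re_sum]
      calc (∑ i, (inner ℂ (b (i,i)) (b (z,z)) : ℂ).re)
          ≤ ∑ i : Fin d, (if i = z then α ^ 2 else if i = o then α ^ 2 else α) :=
            Finset.sum_le_sum fun i _ => hbound i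
        _ = 2 * α ^ 2 + (d - 2) * α := by
            have h : ∀ i : Fin d, (if i = z then α ^ 2 else if i = o then α ^ 2 else α)
                = α + ((if i = z then α ^ 2 - α else 0) + (if i = o then α ^ 2 - α else 0)) := by
              intro i
              by_cases h1 : i = z
              · rw [h1, if_pos rfl, if_pos rfl, if_neg hzo]; ring
              · by_cases h2 : i = o
                · rw [h2, if_neg (Ne.symm hzo), if_pos rfl, if_neg (Ne.symm hzo), if_pos rfl]
                  ring
                · rw [if_neg h1, if_neg h2, if_neg h1, if_neg h2]; ring
            rw [Finset.sum_congr rfl fun i _ => h i]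
            rw [Finset.sum_add_distrib, Finset.sum_add_distrib]
            simp only [Finset.sum_const, Finset.card_univ, Fintype.card_fin, nsmul_eq_mul,
              mul_one, Finset.sum_ite_eq', Finset.mem_univ, if_pos]
            ring
    rw [hre]
    nlinarith [csum]
end
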